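/- Theorem 2 (global convergence of the SD-globalized line-search method): Let f : ℝⁿ → ℝ be of class C², and let (x_k), (d_k) ⊂ ℝⁿ and (α_k) ⊂ ℝ be sequences with x_{k+1} = x_k + α_k d_k for all k. Write g_k = ∇f(x_k) and assume g_k ≠ 0 for all k, and that there exist constants ε_min > 0, 0 < m ≤ M, σ₁ ∈ (0,1) and τ ∈ (0,1) such that for every k: (angle criterion) −⟪g_k, d_k⟫ ≥ ε_min ‖g_k‖ ‖d_k‖; (norm bounds) m ‖g_k‖ ≤ ‖d_k‖ ≤ M ‖g_k‖; (step length) 0 < α_k ≤ 1 and the Armijo condition f(x_k + α_k d_k) ≤ f(x_k) + σ₁ α_k ⟪g_k, d_k⟫ holds; (backtracking) either α_k = 1 or the Armijo condition fails at the previous trial step, i.e. f(x_k + (α_k/τ) d_k) > f(x_k) + σ₁ (α_k/τ) ⟪g_k, d_k⟫. Then every cluster point x̂ of the sequence (x_k) (i.e. every limit of a convergent subsequence) is stationary: ∇f(x̂) = 0. -/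

import Mathlib

open scoped RealInnerProductSpace

private lemma sdg_grad_continuous {n : ℕ} (f : EuclideanSpace ℝ (Fin n) → ℝ)
    (hf : ContDiff ℝ 2 f) : Continuous (gradient f) := by
  have h1 : Continuous (fderiv ℝ f) := hf.continuous_fderiv (by norm_num)
  exact (InnerProductSpace.toDual ℝ _).symm.continuous.comp h1

private lemma sdg_mvt_seg {n : ℕ} (f : EuclideanSpace ℝ (Fin n) → ℝ)
    (hf : ContDiff ℝ 2 f) (x d : EuclideanSpace ℝ (Fin n)) {β : ℝ} (hβ : 0 < β) :
    ∃ t ∈ Set.Ioo (0:ℝ) β,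
      f (x + β • d) - f x = β * ⟪gradient f (x + t • d), d⟫ := by
  have hdiff : Differentiable ℝ f := hf.differentiable (by norm_num)
  have hd : ∀ t : ℝ, HasDerivAt (fun s : ℝ => f (x + s • d))
      (⟪gradient f (x + t • d), d⟫) t := by
    intro t
    have hline : HasDerivAt (fun s : ℝ => x + s • d) d t := by
      simpa using ((hasDerivAt_id t).smul_const d).const_add x
    have hF := hasGradientAt_iff_hasFDerivAt.mp (hdiff (x + t • d)).hasGradientAt
    have := hF.comp_hasDerivAt t hline
    simpa [InnerProductSpace.toDual_apply_apply, Function.comp_def] using this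
  obtain ⟨c, hc, hc2⟩ := exists_hasDerivAt_eq_slope (fun s : ℝ => f (x + s • d))
    (fun t => ⟪gradient f (x + t • d), d⟫) hβ
    (fun t _ => (hd t).continuousAt.continuousWithinAt) (fun t _ => hd t)
  refine ⟨c, hc, ?_⟩
  rw [hc2]
  have hβ' : β ≠ 0 := ne_of_gt hβ
  field_simp
  rw [zero_smul, add_zero, sub_zero]
  ring

/-- Theorem 2: global convergence of the SD-globalized line-search method.
Under the angle criterion, norm bounds making the directions gradient related,
and Armijo backtracking step lengths starting from the unit step, every cluster
point of the iterates is stationary. -/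
theorem sdg_global_convergence {n : ℕ} (f : EuclideanSpace ℝ (Fin n) → ℝ)
    (hf : ContDiff ℝ 2 f)
    (x d : ℕ → EuclideanSpace ℝ (Fin n)) (α : ℕ → ℝ)
    (εmin m M σ₁ τ : ℝ)
    (hεmin : 0 < εmin) (hm : 0 < m) (hmM : m ≤ M)
    (hσ₁ : σ₁ ∈ Set.Ioo (0 : ℝ) 1) (hτ : τ ∈ Set.Ioo (0 : ℝ) 1)
    (hupdate : ∀ k, x (k + 1) = x k + α k • d k)
    (hgne : ∀ k, gradient f (x k) ≠ 0)
    (hangle : ∀ k, -⟪gradient f (x k), d k⟫ ≥ εmin * ‖gradient f (x k)‖ * ‖d k‖)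
    (hlow : ∀ k, m * ‖gradient f (x k)‖ ≤ ‖d k‖)
    (hupp : ∀ k, ‖d k‖ ≤ M * ‖gradient f (x k)‖)
    (hαpos : ∀ k, 0 < α k) (hαle : ∀ k, α k ≤ 1)
    (harmijo : ∀ k, f (x k + α k • d k) ≤ f (x k) + σ₁ * α k * ⟪gradient f (x k), d k⟫)
    (hback : ∀ k, α k = 1 ∨
      f (x k + (α k / τ) • d k) > f (x k) + σ₁ * (α k / τ) * ⟪gradient f (x k), d k⟫)
    (xhat : EuclideanSpace ℝ (Fin n))
    (hcluster : ∃ φ : ℕ → ℕ, StrictMono φ ∧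
      Filter.Tendsto (fun j => x (φ j)) Filter.atTop (nhds xhat)) :
    gradient f xhat = 0 := by
  classical
  obtain ⟨φ, hφ, hxlim⟩ := hcluster
  by_contra hne
  set G := gradient f with hGdef
  have hGcont : Continuous G := sdg_grad_continuous f hf
  have hfc : Continuous f := hf.continuous
  have hgnorm : ∀ k, 0 < ‖G (x k)‖ := fun k => norm_pos_iff.mpr (hgne k)
  have hdnorm : ∀ k, 0 < ‖d k‖ := fun k =>
    lt_of_lt_of_le (mul_pos hm (hgnorm k)) (hlow k)
  have hgd : ∀ k, ⟪G (x k), d k⟫ < 0 := by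
    intro k
    have h1 := hangle k
    have h2 := hgnorm k
    have h3 := hdnorm k
    nlinarith [mul_pos (mul_pos hεmin h2) h3]
  -- f is decreasing along the iterates
  have hdec : ∀ k, f (x (k+1)) ≤ f (x k) := by
    intro k
    rw [hupdate k]
    have h1 : σ₁ * α k * ⟪G (x k), d k⟫ < 0 :=
      mul_neg_of_pos_of_neg (mul_pos hσ₁.1 (hαpos k)) (hgd k)
    linarith [harmijo k]
  have hanti : Antitone (fun k => f (x k)) := antitone_nat_of_succ_le hdec
  have hflimsub : Filter.Tendsto (fun j => f (x (φ j))) Filter.atTop (nhds (f xhat)) :=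
    (hfc.tendsto xhat).comp hxlim
  -- the whole sequence f (x k) tends to f xhat
  have hlb : ∀ k, f xhat ≤ f (x k) := by
    intro k
    refine le_of_tendsto hflimsub ?_
    filter_upwards [Filter.eventually_ge_atTop k] with j hj
    exact hanti (le_trans hj hφ.le_apply)
  have hbdd : BddBelow (Set.range fun k => f (x k)) :=
    ⟨f xhat, by rintro y ⟨k, rfl⟩; exact hlb k⟩
  have hfall : Filter.Tendsto (fun k => f (x k)) Filter.atTop (nhds (f xhat)) := by
    have h1 := tendsto_atTop_ciInf hanti hbdd
    have h2 : Filter.Tendsto (fun j => f (x (φ j))) Filter.atTop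
        (nhds (⨅ k, f (x k))) := h1.comp hφ.tendsto_atTop
    have h3 := tendsto_nhds_unique h2 hflimsub
    rwa [h3] at h1
  -- the successive decreases tend to 0
  have hdiff0 : Filter.Tendsto (fun k => f (x k) - f (x (k+1))) Filter.atTop (nhds 0) := by
    have h2 : Filter.Tendsto (fun k => f (x (k+1))) Filter.atTop (nhds (f xhat)) :=
      hfall.comp (Filter.tendsto_add_atTop_nat 1)
    simpa using hfall.sub h2
  -- hence α k * ‖g k‖² → 0
  have hcpos : 0 < σ₁ * εmin * m := by have := hσ₁.1; positivity
  have hkey : ∀ k, σ₁ * εmin * m * (α k * ‖G (x k)‖^2) ≤ f (x k) - f (x (k+1)) := by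
    intro k
    have h1 := harmijo k
    rw [hupdate k]
    have h2 := hangle k
    have h3 := hlow k
    have h4 := hgnorm k
    have h5 := hαpos k
    have h6 := hσ₁.1
    have e1 : εmin * ‖G (x k)‖ * (m * ‖G (x k)‖) ≤ εmin * ‖G (x k)‖ * ‖d k‖ :=
      mul_le_mul_of_nonneg_left h3 (le_of_lt (mul_pos hεmin h4))
    have e2 : σ₁ * α k * (εmin * ‖G (x k)‖ * (m * ‖G (x k)‖)) ≤
        σ₁ * α k * (εmin * ‖G (x k)‖ * ‖d k‖) :=
      mul_le_mul_of_nonneg_left e1 (le_of_lt (mul_pos h6 h5))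
    have e3 : σ₁ * α k * (εmin * ‖G (x k)‖ * ‖d k‖) ≤
        σ₁ * α k * (-⟪G (x k), d k⟫) :=
      mul_le_mul_of_nonneg_left h2.le (le_of_lt (mul_pos h6 h5))
    nlinarith [e2, e3]
  have hA0 : Filter.Tendsto (fun k => α k * ‖G (x k)‖^2) Filter.atTop (nhds 0) := by
    apply squeeze_zero
      (fun k => le_of_lt (mul_pos (hαpos k) (pow_pos (hgnorm k) 2))) (fun k => ?_)
      (by simpa using hdiff0.div_const (σ₁ * εmin * m))
    rw [le_div_iff₀ hcpos]
    calc α k * ‖G (x k)‖^2 * (σ₁ * εmin * m)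
        = σ₁ * εmin * m * (α k * ‖G (x k)‖^2) := by ring
      _ ≤ _ := hkey k
  -- along the subsequence, gradients converge to G xhat ≠ 0
  have hglim : Filter.Tendsto (fun j => G (x (φ j))) Filter.atTop (nhds (G xhat)) :=
    (hGcont.tendsto xhat).comp hxlim
  have hnormlim : Filter.Tendsto (fun j => ‖G (x (φ j))‖) Filter.atTop (nhds ‖G xhat‖) :=
    hglim.norm
  have hc0pos : 0 < ‖G xhat‖ := norm_pos_iff.mpr hne
  -- α (φ j) → 0
  have hαlim : Filter.Tendsto (fun j => α (φ j)) Filter.atTop (nhds 0) := by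
    have h1 : Filter.Tendsto (fun j => α (φ j) * ‖G (x (φ j))‖^2) Filter.atTop (nhds 0) :=
      hA0.comp hφ.tendsto_atTop
    have h2 : Filter.Tendsto (fun j => ‖G (x (φ j))‖^2) Filter.atTop (nhds (‖G xhat‖^2)) :=
      hnormlim.pow 2
    have h3 := h1.div h2 (ne_of_gt (pow_pos hc0pos 2))
    rw [zero_div] at h3
    refine h3.congr fun j => ?_
    rw [Pi.div_apply]
    field_simp [ne_of_gt (hgnorm (φ j))]
  -- eventually α (φ j) < 1, hence backtracking failed at the previous trial step
  have hevlt : ∀ᶠ j in Filter.atTop, α (φ j) < 1 := hαlim.eventually_lt_const one_pos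
  -- mean value point between x (φ j) and the failed trial point
  have hPev : ∀ᶠ j in Filter.atTop, ∃ ξ : EuclideanSpace ℝ (Fin n),
      ‖ξ - x (φ j)‖ ≤ α (φ j) / τ * (M * ‖G (x (φ j))‖) ∧
      (1 - σ₁) * εmin * ‖G (x (φ j))‖ ≤ ‖G ξ - G (x (φ j))‖ := by
    filter_upwards [hevlt] with j hj
    have hfail : f (x (φ j) + (α (φ j) / τ) • d (φ j)) >
        f (x (φ j)) + σ₁ * (α (φ j) / τ) * ⟪G (x (φ j)), d (φ j)⟫ := by
      rcases hback (φ j) with h | h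
      · exact absurd h (ne_of_lt hj)
      · exact h
    have hβpos : 0 < α (φ j) / τ := div_pos (hαpos (φ j)) hτ.1
    obtain ⟨t, ht, heq⟩ := sdg_mvt_seg f hf (x (φ j)) (d (φ j)) hβpos
    set ξ := x (φ j) + t • d (φ j) with hξdef
    refine ⟨ξ, ?_, ?_⟩
    · have hnorm : ‖ξ - x (φ j)‖ = |t| * ‖d (φ j)‖ := by
        simp [hξdef, norm_smul, Real.norm_eq_abs]
      rw [hnorm, abs_of_pos ht.1]
      calc t * ‖d (φ j)‖ ≤ (α (φ j) / τ) * ‖d (φ j)‖ :=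
            mul_le_mul_of_nonneg_right (le_of_lt ht.2) (norm_nonneg _)
        _ ≤ α (φ j) / τ * (M * ‖G (x (φ j))‖) :=
            mul_le_mul_of_nonneg_left (hupp (φ j)) (le_of_lt hβpos)
    · rw [hGdef] at hfail ⊢
      have h1 : (α (φ j) / τ) * (σ₁ * ⟪gradient f (x (φ j)), d (φ j)⟫) <
          (α (φ j) / τ) * ⟪gradient f ξ, d (φ j)⟫ := by
        linarith [hfail, heq]
      have h2 : σ₁ * ⟪gradient f (x (φ j)), d (φ j)⟫ < ⟪gradient f ξ, d (φ j)⟫ :=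
        lt_of_mul_lt_mul_left h1 (le_of_lt hβpos)
      have h3 : (1 - σ₁) * εmin * (‖gradient f (x (φ j))‖ * ‖d (φ j)‖) ≤
          ⟪gradient f ξ - gradient f (x (φ j)), d (φ j)⟫ := by
        rw [inner_sub_left]
        have hang := hangle (φ j)
        have hprod := mul_le_mul_of_nonneg_left hang.le
          (by linarith [hσ₁.2] : (0:ℝ) ≤ 1 - σ₁)
        nlinarith [hprod, h2]
      have h4 := real_inner_le_norm (gradient f ξ - gradient f (x (φ j))) (d (φ j))
      have h5 := hdnorm (φ j)
      have h6 : (1 - σ₁) * εmin * ‖gradient f (x (φ j))‖ * ‖d (φ j)‖ ≤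
          ‖gradient f ξ - gradient f (x (φ j))‖ * ‖d (φ j)‖ := by nlinarith [h3, h4]
      exact le_of_mul_le_mul_right h6 h5
  -- choose the mean value points
  set P : ℕ → Prop := fun j => ∃ ξ : EuclideanSpace ℝ (Fin n),
      ‖ξ - x (φ j)‖ ≤ α (φ j) / τ * (M * ‖G (x (φ j))‖) ∧
      (1 - σ₁) * εmin * ‖G (x (φ j))‖ ≤ ‖G ξ - G (x (φ j))‖ with hPdef
  have hPev' : ∀ᶠ j in Filter.atTop, P j := hPev
  set ξ : ℕ → EuclideanSpace ℝ (Fin n) :=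
    fun j => if h : P j then h.choose else x (φ j) with hξfun
  have hξspec : ∀ j, P j → ‖ξ j - x (φ j)‖ ≤ α (φ j) / τ * (M * ‖G (x (φ j))‖) ∧
      (1 - σ₁) * εmin * ‖G (x (φ j))‖ ≤ ‖G (ξ j) - G (x (φ j))‖ := by
    intro j hj
    simp only [hξfun, dif_pos hj]
    exact hj.choose_spec
  -- ξ j → xhat
  have hB0 : Filter.Tendsto (fun j => α (φ j) / τ * (M * ‖G (x (φ j))‖))
      Filter.atTop (nhds 0) := by
    have := (hαlim.div_const τ).mul (hnormlim.const_mul M)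
    simpa using this
  have hξdiff : Filter.Tendsto (fun j => ξ j - x (φ j)) Filter.atTop (nhds 0) := by
    rw [tendsto_zero_iff_norm_tendsto_zero]
    refine squeeze_zero' (Filter.Eventually.of_forall fun j => norm_nonneg _) ?_ hB0
    filter_upwards [hPev'] with j hj
    exact (hξspec j hj).1
  have hξlim : Filter.Tendsto ξ Filter.atTop (nhds xhat) := by
    have := hξdiff.add hxlim
    rw [zero_add] at this
    refine this.congr fun j => ?_
    abel
  -- contradiction
  have hGξ : Filter.Tendsto (fun j => G (ξ j)) Filter.atTop (nhds (G xhat)) :=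
    (hGcont.tendsto xhat).comp hξlim
  have hDiffG : Filter.Tendsto (fun j => ‖G (ξ j) - G (x (φ j))‖)
      Filter.atTop (nhds 0) := by
    have := (hGξ.sub hglim).norm
    simpa using this
  have hRHS : Filter.Tendsto (fun j => (1 - σ₁) * εmin * ‖G (x (φ j))‖)
      Filter.atTop (nhds ((1 - σ₁) * εmin * ‖G xhat‖)) :=
    hnormlim.const_mul _
  have hfinal : (1 - σ₁) * εmin * ‖G xhat‖ ≤ 0 := by
    refine le_of_tendsto_of_tendsto hRHS hDiffG ?_
    filter_upwards [hPev'] with j hj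
    exact (hξspec j hj).2
  have : 0 < (1 - σ₁) * εmin * ‖G xhat‖ :=
    mul_pos (mul_pos (by linarith [hσ₁.2]) hεmin) hc0pos
  linarith
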